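/- Let T : ℝ^n → ℝ^n be α-averaged for some α ∈ (0,1), i.e., T = (1−α)Id + αR for some nonexpansive R : ℝ^n → ℝ^n, and suppose fix T ≠ ∅. Then for every summable sequence (v^t) in ℝ^n and every z^0 ∈ ℝ^n, the perturbed Banach–Picard iteration z^{t+1} = T(z^t) + v^t converges to a point z⋆ ∈ fix T (moreover fix T = fix R). -/

import Mathlib

open Filter Topology
open scoped RealInnerProductSpace

lemma avg_key {E : Type*} [NormedAddCommGroup E] [InnerProductSpace ℝ E]
    {α : ℝ} (hα0 : 0 < α) (hα1 : α < 1)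
    {R T : E → E} (hR : ∀ x y, ‖R x - R y‖ ≤ ‖x - y‖)
    (hTR : ∀ w, T w = (1 - α) • w + α • R w)
    {p : E} (hp : T p = p) (x : E) :
    ‖T x - p‖ ^ 2 + ((1 - α) / α) * ‖x - T x‖ ^ 2 ≤ ‖x - p‖ ^ 2 := by
  have hRp : R p = p := by
    have h := (hTR p).symm.trans hp
    have h2 : α • R p = α • p := by
      have : α • R p = p - (1 - α) • p := by rw [eq_sub_iff_add_eq, add_comm]; exact h
      rw [this]; module
    exact smul_right_injective E (ne_of_gt hα0) h2
  set a := x - p with ha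
  set b := R x - p with hb
  have hab : ‖b‖ ≤ ‖a‖ := by
    have := hR x p; rw [hRp] at this; exact this
  have hTx : T x - p = (1 - α) • a + α • b := by rw [hTR, ha, hb]; module
  have hxT : x - T x = α • (a - b) := by rw [hTR, ha, hb]; module
  rw [hTx, hxT]
  have e1 : ‖(1 - α) • a + α • b‖ ^ 2
      = (1 - α) ^ 2 * ‖a‖ ^ 2 + 2 * ((1 - α) * α) * ⟪a, b⟫ + α ^ 2 * ‖b‖ ^ 2 := by
    rw [norm_add_sq_real, norm_smul, norm_smul, real_inner_smul_left, real_inner_smul_right]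
    rw [Real.norm_eq_abs, Real.norm_eq_abs, abs_of_pos hα0, abs_of_pos (by linarith : (0:ℝ) < 1 - α)]
    ring
  have e2 : ‖a - b‖ ^ 2 = ‖a‖ ^ 2 - 2 * ⟪a, b⟫ + ‖b‖ ^ 2 := by
    rw [norm_sub_sq_real]
  have e3 : ‖α • (a - b)‖ ^ 2 = α ^ 2 * ‖a - b‖ ^ 2 := by
    rw [norm_smul, Real.norm_eq_abs, abs_of_pos hα0]; ring
  rw [e1, e3, e2]
  have hαne : α ≠ 0 := ne_of_gt hα0
  have key : (1 - α) / α * (α ^ 2 * (‖a‖ ^ 2 - 2 * ⟪a, b⟫ + ‖b‖ ^ 2))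
      = (1 - α) * α * (‖a‖ ^ 2 - 2 * ⟪a, b⟫ + ‖b‖ ^ 2) := by
    field_simp
  rw [key]
  nlinarith [pow_le_pow_left₀ (norm_nonneg b) hab 2, hα0, hα1]

theorem perturbed_picard_averaged_converges
    {n : ℕ} (T R : EuclideanSpace ℝ (Fin n) → EuclideanSpace ℝ (Fin n))
    (α : ℝ) (hα0 : 0 < α) (hα1 : α < 1)
    (hR : ∀ x y, ‖R x - R y‖ ≤ ‖x - y‖)
    (hTR : ∀ w, T w = (1 - α) • w + α • R w)
    (hfix : {w : EuclideanSpace ℝ (Fin n) | T w = w}.Nonempty)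
    (v : ℕ → EuclideanSpace ℝ (Fin n)) (hv : Summable fun t => ‖v t‖)
    (z : ℕ → EuclideanSpace ℝ (Fin n))
    (hz : ∀ t, z (t + 1) = T (z t) + v t) :
    (∃ zstar : EuclideanSpace ℝ (Fin n),
        T zstar = zstar ∧ Tendsto z atTop (𝓝 zstar)) ∧
      {w : EuclideanSpace ℝ (Fin n) | T w = w} =
        {w : EuclideanSpace ℝ (Fin n) | R w = w} := by
  -- fix T = fix R
  have hfixiff : ∀ w, T w = w ↔ R w = w := by
    intro w
    constructor
    · intro h
      have h' := (hTR w).symm.trans h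
      have h2 : α • R w = α • w := by
        have : α • R w = w - (1 - α) • w := by rw [eq_sub_iff_add_eq, add_comm]; exact h'
        rw [this]; module
      exact smul_right_injective _ (ne_of_gt hα0) h2
    · intro h
      rw [hTR, h]; module
  have hsets : {w : EuclideanSpace ℝ (Fin n) | T w = w} =
      {w : EuclideanSpace ℝ (Fin n) | R w = w} := by
    ext w; exact hfixiff w
  refine ⟨?_, hsets⟩
  obtain ⟨p, hp⟩ := hfix
  simp only [Set.mem_setOf_eq] at hp
  set c : ℝ := (1 - α) / α with hc
  have hcpos : 0 < c := div_pos (by linarith) hα0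
  -- nonexpansiveness towards any fixed point
  have hne : ∀ q, T q = q → ∀ x, ‖T x - q‖ ≤ ‖x - q‖ := by
    intro q hq x
    have hk := avg_key hα0 hα1 hR hTR hq x
    have h2 : ‖T x - q‖ ^ 2 ≤ ‖x - q‖ ^ 2 := by
      nlinarith [mul_nonneg hcpos.le (sq_nonneg ‖x - T x‖)]
    nlinarith [norm_nonneg (T x - q), norm_nonneg (x - q)]
  -- quasi-Fejér recursion
  have hrec : ∀ q, T q = q → ∀ t, ‖z (t + 1) - q‖ ≤ ‖z t - q‖ + ‖v t‖ := by
    intro q hq t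
    have : z (t + 1) - q = (T (z t) - q) + v t := by rw [hz t]; abel
    calc ‖z (t + 1) - q‖ = ‖(T (z t) - q) + v t‖ := by rw [this]
      _ ≤ ‖T (z t) - q‖ + ‖v t‖ := norm_add_le _ _
      _ ≤ ‖z t - q‖ + ‖v t‖ := by linarith [hne q hq (z t)]
  set S : ℝ := ∑' t, ‖v t‖ with hS
  have hεS : ∀ t, ‖v t‖ ≤ S := fun t => Summable.le_tsum hv t (fun _ _ => norm_nonneg _)
  have hSnn : 0 ≤ S := tsum_nonneg (fun _ => norm_nonneg _)
  -- boundedness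
  set M : ℝ := ‖z 0 - p‖ + S with hM
  have hbound : ∀ t, ‖z t - p‖ ≤ M := by
    have key : ∀ t, ‖z t - p‖ ≤ ‖z 0 - p‖ + ∑ s ∈ Finset.range t, ‖v s‖ := by
      intro t
      induction t with
      | zero => simp
      | succ t ih =>
        calc ‖z (t + 1) - p‖ ≤ ‖z t - p‖ + ‖v t‖ := hrec p hp t
          _ ≤ ‖z 0 - p‖ + ∑ s ∈ Finset.range t, ‖v s‖ + ‖v t‖ := by linarith
          _ = ‖z 0 - p‖ + ∑ s ∈ Finset.range (t + 1), ‖v s‖ := by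
              rw [Finset.sum_range_succ]; ring
    intro t
    calc ‖z t - p‖ ≤ ‖z 0 - p‖ + ∑ s ∈ Finset.range t, ‖v s‖ := key t
      _ ≤ ‖z 0 - p‖ + S := by
          have := Summable.sum_le_tsum (Finset.range t) (fun s _ => norm_nonneg (v s)) hv
          linarith
  -- one-step square estimate
  have hsq : ∀ t, ‖z (t + 1) - p‖ ^ 2
      ≤ ‖z t - p‖ ^ 2 - c * ‖z t - T (z t)‖ ^ 2 + (2 * M + S) * ‖v t‖ := by
    intro t
    have h1 : ‖z (t + 1) - p‖ ≤ ‖T (z t) - p‖ + ‖v t‖ := by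
      have : z (t + 1) - p = (T (z t) - p) + v t := by rw [hz t]; abel
      rw [this]; exact norm_add_le _ _
    have hk := avg_key hα0 hα1 hR hTR hp (z t)
    have hTM : ‖T (z t) - p‖ ≤ M := le_trans (hne p hp (z t)) (hbound t)
    nlinarith [norm_nonneg (z (t + 1) - p), norm_nonneg (T (z t) - p), norm_nonneg (v t),
      mul_nonneg (sub_nonneg.2 hTM) (norm_nonneg (v t)),
      mul_nonneg (sub_nonneg.2 (hεS t)) (norm_nonneg (v t))]
  -- summability of residuals squared
  set r : ℕ → ℝ := fun t => ‖z t - T (z t)‖ with hrdef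
  have htel : ∀ N, ∑ t ∈ Finset.range N, c * r t ^ 2
      ≤ ‖z 0 - p‖ ^ 2 + (2 * M + S) * S := by
    intro N
    have key : ∀ N, ∑ t ∈ Finset.range N, c * r t ^ 2
        ≤ ‖z 0 - p‖ ^ 2 - ‖z N - p‖ ^ 2
          + (2 * M + S) * ∑ t ∈ Finset.range N, ‖v t‖ := by
      intro N
      induction N with
      | zero => simp
      | succ N ih =>
        rw [Finset.sum_range_succ, Finset.sum_range_succ]
        have := hsq N
        simp only [hrdef] at *
        nlinarith
    have hsum : ∑ t ∈ Finset.range N, ‖v t‖ ≤ S :=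
      Summable.sum_le_tsum (Finset.range N) (fun s _ => norm_nonneg (v s)) hv
    have h2M : 0 ≤ 2 * M + S := by
      have : 0 ≤ M := le_trans (norm_nonneg _) (by simp [hM]; linarith [hSnn])
      linarith
    calc ∑ t ∈ Finset.range N, c * r t ^ 2
        ≤ ‖z 0 - p‖ ^ 2 - ‖z N - p‖ ^ 2 + (2 * M + S) * ∑ t ∈ Finset.range N, ‖v t‖ := key N
      _ ≤ ‖z 0 - p‖ ^ 2 + (2 * M + S) * S := by
          nlinarith [sq_nonneg ‖z N - p‖, mul_le_mul_of_nonneg_left hsum h2M]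
  have hrsq_summable : Summable (fun t => r t ^ 2) := by
    have h : Summable (fun t => c * r t ^ 2) :=
      summable_of_sum_range_le (fun t => mul_nonneg hcpos.le (sq_nonneg (r t))) htel
    have h2 := h.mul_left c⁻¹
    refine h2.congr (fun t => ?_)
    rw [inv_mul_cancel_left₀ hcpos.ne']
  have hr0 : Tendsto r atTop (𝓝 0) := by
    have h2 := hrsq_summable.tendsto_atTop_zero
    have h3 : Tendsto (fun t => Real.sqrt (r t ^ 2)) atTop (𝓝 0) := by
      have := (Real.continuous_sqrt.tendsto 0).comp h2
      rwa [Real.sqrt_zero, Function.comp_def] at this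
    refine h3.congr (fun t => ?_)
    exact Real.sqrt_sq (norm_nonneg _)
  -- residual tends to zero
  have hres : Tendsto (fun t => z t - T (z t)) atTop (𝓝 0) := by
    rw [tendsto_zero_iff_norm_tendsto_zero]
    exact hr0
  -- subsequence converging to a point
  have hmem : ∀ t, z t ∈ Metric.closedBall p M := by
    intro t
    rw [Metric.mem_closedBall, dist_eq_norm]
    exact hbound t
  obtain ⟨zbar, _, φ, hφmono, hφconv⟩ :=
    tendsto_subseq_of_bounded Metric.isBounded_closedBall hmem
  -- T is continuous
  have hTcont : Continuous T := by
    have hRlip : LipschitzWith 1 R := by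
      refine LipschitzWith.of_dist_le_mul (fun x y => ?_)
      rw [dist_eq_norm, dist_eq_norm]
      simpa using hR x y
    have : T = fun w => (1 - α) • w + α • R w := funext hTR
    rw [this]
    exact (continuous_id.const_smul (1 - α)).add (hRlip.continuous.const_smul α)
  -- zbar is a fixed point
  have hTzbar : T zbar = zbar := by
    have h1 : Tendsto (fun k => T (z (φ k))) atTop (𝓝 (T zbar)) :=
      (hTcont.tendsto zbar).comp hφconv
    have h2 : Tendsto (fun k => z (φ k) - T (z (φ k))) atTop (𝓝 0) :=
      hres.comp hφmono.tendsto_atTop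
    have h3 : Tendsto (fun k => z (φ k) - (z (φ k) - T (z (φ k)))) atTop (𝓝 (zbar - 0)) :=
      hφconv.sub h2
    have h4 : Tendsto (fun k => T (z (φ k))) atTop (𝓝 zbar) := by
      simpa using h3
    exact tendsto_nhds_unique h1 h4
  -- final convergence of the whole sequence
  set b : ℕ → ℝ := fun t => ‖z t - zbar‖ with hbdef
  set tl : ℕ → ℝ := fun t => ∑' s, ‖v (t + s)‖ with htldef
  have htail_sum : ∀ t, Summable (fun s => ‖v (t + s)‖) := by
    intro t
    have := (summable_nat_add_iff t).2 hv
    exact this.congr (fun s => by rw [add_comm])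
  have htl_rec : ∀ t, tl t = ‖v t‖ + tl (t + 1) := by
    intro t
    have h0 := Summable.tsum_eq_zero_add (htail_sum t)
    simp only [add_zero] at h0
    rw [htldef]
    simp only []
    rw [h0]
    congr 1
    exact tsum_congr (fun s => by rw [show t + (s + 1) = t + 1 + s by ring])
  have htl0 : Tendsto tl atTop (𝓝 0) := by
    have := tendsto_sum_nat_add (f := fun t => ‖v t‖)
    refine this.congr (fun t => tsum_congr (fun s => by rw [add_comm]))
  have htlnn : ∀ t, 0 ≤ tl t := fun t => tsum_nonneg (fun _ => norm_nonneg _)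
  have hbrec : ∀ t, b (t + 1) ≤ b t + ‖v t‖ := fun t => hrec zbar hTzbar t
  set C : ℕ → ℝ := fun t => b t + tl t with hCdef
  have hCanti : Antitone C := by
    refine antitone_nat_of_succ_le (fun t => ?_)
    have := hbrec t
    have h2 := htl_rec t
    simp only [hCdef]
    linarith
  have hCnn : ∀ t, 0 ≤ C t := fun t => add_nonneg (norm_nonneg _) (htlnn t)
  have hbφ : Tendsto (fun k => b (φ k)) atTop (𝓝 0) := by
    have := (tendsto_iff_norm_sub_tendsto_zero).1 hφconv
    exact this
  have hCφ : Tendsto (fun k => C (φ k)) atTop (𝓝 0) := by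
    have h2 : Tendsto (fun k => tl (φ k)) atTop (𝓝 0) := htl0.comp hφmono.tendsto_atTop
    simpa using hbφ.add h2
  have hClim : Tendsto C atTop (𝓝 (⨅ t, C t)) := by
    refine tendsto_atTop_ciInf hCanti ⟨0, fun x hx => ?_⟩
    obtain ⟨t, rfl⟩ := hx
    exact hCnn t
  have hinf0 : (⨅ t, C t) = 0 := by
    have := hClim.comp hφmono.tendsto_atTop
    exact tendsto_nhds_unique this hCφ
  rw [hinf0] at hClim
  have hb0 : Tendsto b atTop (𝓝 0) := by
    refine squeeze_zero (fun t => norm_nonneg _) (fun t => ?_) hClim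
    exact le_add_of_nonneg_right (htlnn t)
  refine ⟨zbar, hTzbar, ?_⟩
  rw [tendsto_iff_norm_sub_tendsto_zero]
  exact hb0
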